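/- Let B be a deterministic specification IOVPTS with inputs L_I and outputs L_U and n states. Then one can effectively construct a visibly pushdown fault model T which is ioco-like complete for B (i.e., for every implementation IOVPTS I over L = L_I ∪ L_U, I passes T if and only if I ioco-like-conforms to B); moreover T is deterministic and has n+1 states. -/

import Mathlib

inductive VPKind : Type where
  | call : VPKind
  | ret : VPKind
  | intern : VPKind

/-- A visibly pushdown automaton over an alphabet `A` partitioned by `kind` into
call (push), return (pop) and simple (internal) symbols.  The stack bottom `⊥` is
implicit: a stack is a `List Stack`, the empty list meaning the stack contains only `⊥`.
`intT` transitions labelled by `none` are ε-transitions. -/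
structure VPA (A : Type) (kind : A → VPKind) where
  State : Type
  Stack : Type
  fintypeState : Fintype State
  init : Set State
  final : Set State
  pushT : Set (State × A × Stack × State)
  popT : Set (State × A × Option Stack × State)
  intT : Set (State × Option A × State)
  push_call : ∀ p a Z q, (p, a, Z, q) ∈ pushT → kind a = VPKind.call
  pop_ret : ∀ p a Z q, (p, a, Z, q) ∈ popT → kind a = VPKind.ret
  int_simple : ∀ p a q, (p, some a, q) ∈ intT → kind a = VPKind.intern

attribute [instance] VPA.fintypeState

namespace VPA

variable {A : Type} {kind : A → VPKind}

abbrev Conf (M : VPA A kind) : Type := M.State × List A × List M.Stack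

inductive Step (M : VPA A kind) : M.Conf → M.Conf → Prop where
  | push {p q : M.State} {a : A} {Z : M.Stack} {σ : List A} {α : List M.Stack} :
      (p, a, Z, q) ∈ M.pushT → Step M (p, a :: σ, α) (q, σ, Z :: α)
  | pop {p q : M.State} {a : A} {Z : M.Stack} {σ : List A} {α : List M.Stack} :
      (p, a, some Z, q) ∈ M.popT → Step M (p, a :: σ, Z :: α) (q, σ, α)
  | popEmpty {p q : M.State} {a : A} {σ : List A} :
      (p, a, none, q) ∈ M.popT → Step M (p, a :: σ, []) (q, σ, [])
  | int {p q : M.State} {a : A} {σ : List A} {α : List M.Stack} :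
      (p, some a, q) ∈ M.intT → Step M (p, a :: σ, α) (q, σ, α)
  | eps {p q : M.State} {σ : List A} {α : List M.Stack} :
      (p, none, q) ∈ M.intT → Step M (p, σ, α) (q, σ, α)

/-- Reflexive-transitive closure `↦*` of the one-step move relation. -/
def Steps (M : VPA A kind) : M.Conf → M.Conf → Prop := Relation.ReflTransGen M.Step

/-- `n`-th power `↦ⁿ` of the one-step move relation. -/
def StepN (M : VPA A kind) : ℕ → M.Conf → M.Conf → Prop
  | 0 => fun c c' => c = c'
  | n + 1 => fun c c' => ∃ d, M.Step c d ∧ StepN M n d c'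

def Lang (M : VPA A kind) : Set (List A) :=
  { σ | ∃ s₀ ∈ M.init, ∃ p ∈ M.final, ∃ β, M.Steps (s₀, σ, []) (p, [], β) }

def NoEps (M : VPA A kind) : Prop := ∀ p q, (p, none, q) ∉ M.intT

def Deterministic (M : VPA A kind) : Prop :=
  M.init.Subsingleton ∧
  (∀ p a Z₁ q₁ Z₂ q₂, (p, a, Z₁, q₁) ∈ M.pushT → (p, a, Z₂, q₂) ∈ M.pushT →
      Z₁ = Z₂ ∧ q₁ = q₂) ∧
  (∀ p a Z q₁ q₂, (p, a, Z, q₁) ∈ M.popT → (p, a, Z, q₂) ∈ M.popT → q₁ = q₂) ∧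
  (∀ p a q₁ q₂, (p, a, q₁) ∈ M.intT → (p, a, q₂) ∈ M.intT → q₁ = q₂) ∧
  (∀ p q',
    ((∃ a Z q, (p, a, Z, q) ∈ M.pushT) ∨ (∃ a Z q, (p, a, Z, q) ∈ M.popT) ∨
      (∃ a q, (p, some a, q) ∈ M.intT)) → (p, none, q') ∉ M.intT)

def NonBlocking (M : VPA A kind) : Prop :=
  ∀ (s : M.State) (σ : List A) (α : List M.Stack), ∃ p β, M.Steps (s, σ, α) (p, [], β)

/-- The synchronous product of two VPAs over a common alphabet. -/
def prod (M N : VPA A kind) : VPA A kind where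
  State := M.State × N.State
  Stack := M.Stack × N.Stack
  fintypeState := inferInstance
  init := M.init ×ˢ N.init
  final := M.final ×ˢ N.final
  pushT := { t | (t.1.1, t.2.1, t.2.2.1.1, t.2.2.2.1) ∈ M.pushT ∧
                 (t.1.2, t.2.1, t.2.2.1.2, t.2.2.2.2) ∈ N.pushT }
  popT := { t |
      match t.2.2.1 with
      | some Z => (t.1.1, t.2.1, some Z.1, t.2.2.2.1) ∈ M.popT ∧
                  (t.1.2, t.2.1, some Z.2, t.2.2.2.2) ∈ N.popT
      | none => (t.1.1, t.2.1, (none : Option M.Stack), t.2.2.2.1) ∈ M.popT ∧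
                (t.1.2, t.2.1, (none : Option N.Stack), t.2.2.2.2) ∈ N.popT }
  intT := { t |
      match t.2.1 with
      | some a => (t.1.1, some a, t.2.2.1) ∈ M.intT ∧ (t.1.2, some a, t.2.2.2) ∈ N.intT
      | none => (t.1.1 = t.2.2.1 ∧ (t.1.2, none, t.2.2.2) ∈ N.intT) ∨
                (t.1.2 = t.2.2.2 ∧ (t.1.1, none, t.2.2.1) ∈ M.intT) }
  push_call := fun _ _ _ _ h => M.push_call _ _ _ _ h.1
  pop_ret := by
    intro p a Z q h
    cases Z with
    | some Z => exact M.pop_ret _ _ _ _ h.1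
    | none => exact M.pop_ret _ _ _ _ h.1
  int_simple := fun _ _ _ h => M.int_simple _ _ _ h.1

end VPA

/-- A visibly pushdown transition system over an alphabet `L` partitioned by `kind`.
`intT` transitions labelled by `none` are silent `ς`-transitions. -/
structure VPTS (L : Type) (kind : L → VPKind) where
  State : Type
  Stack : Type
  fintypeState : Fintype State
  init : Set State
  pushT : Set (State × L × Stack × State)
  popT : Set (State × L × Option Stack × State)
  intT : Set (State × Option L × State)
  push_call : ∀ p a Z q, (p, a, Z, q) ∈ pushT → kind a = VPKind.call
  pop_ret : ∀ p a Z q, (p, a, Z, q) ∈ popT → kind a = VPKind.ret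
  int_simple : ∀ p a q, (p, some a, q) ∈ intT → kind a = VPKind.intern

attribute [instance] VPTS.fintypeState

namespace VPTS

variable {L : Type} {kind : L → VPKind}

abbrev Conf (M : VPTS L kind) : Type := M.State × List M.Stack

/-- `M.Obs c σ c'` means `c ⇒^σ c'`: there is a sequence of one-step moves from `c`
to `c'` whose sequence of non-silent labels is `σ`. -/
inductive Obs (M : VPTS L kind) : M.Conf → List L → M.Conf → Prop where
  | refl (c : M.Conf) : Obs M c [] c
  | push {p q : M.State} {a : L} {Z : M.Stack} {α : List M.Stack} {σ : List L} {c : M.Conf} :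
      (p, a, Z, q) ∈ M.pushT → Obs M (q, Z :: α) σ c → Obs M (p, α) (a :: σ) c
  | pop {p q : M.State} {a : L} {Z : M.Stack} {α : List M.Stack} {σ : List L} {c : M.Conf} :
      (p, a, some Z, q) ∈ M.popT → Obs M (q, α) σ c → Obs M (p, Z :: α) (a :: σ) c
  | popEmpty {p q : M.State} {a : L} {σ : List L} {c : M.Conf} :
      (p, a, none, q) ∈ M.popT → Obs M (q, []) σ c → Obs M (p, []) (a :: σ) c
  | int {p q : M.State} {a : L} {α : List M.Stack} {σ : List L} {c : M.Conf} :
      (p, some a, q) ∈ M.intT → Obs M (q, α) σ c → Obs M (p, α) (a :: σ) c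
  | silent {p q : M.State} {α : List M.Stack} {σ : List L} {c : M.Conf} :
      (p, none, q) ∈ M.intT → Obs M (q, α) σ c → Obs M (p, α) σ c

/-- The observable traces of `M`. -/
def otr (M : VPTS L kind) : Set (List L) :=
  { σ | ∃ s₀ ∈ M.init, ∃ c, M.Obs (s₀, []) σ c }

/-- `I` (D,F)-visibly conforms to `S`. -/
def VConf (I S : VPTS L kind) (D F : Set (List L)) : Prop :=
  (∀ σ ∈ I.otr ∩ F, σ ∉ S.otr) ∧ (∀ σ ∈ I.otr ∩ D, σ ∈ S.otr)

def after (M : VPTS L kind) (c : M.Conf) (σ : List L) : Set M.Conf :=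
  { c' | M.Obs c σ c' }

/-- The output symbols (members of `LU`) enabled at some configuration of `C`. -/
def outSet (M : VPTS L kind) (LU : Set L) (C : Set M.Conf) : Set L :=
  { ℓ | ℓ ∈ LU ∧ ∃ c ∈ C, ∃ c', M.Obs c [ℓ] c' }

/-- `I` ioco-like conforms to `S`, with output alphabet `LU`. -/
def Ioco (LU : Set L) (I S : VPTS L kind) : Prop :=
  ∀ σ ∈ S.otr, ∀ q₀ ∈ I.init, ∀ ℓ ∈ I.outSet LU (I.after (q₀, []) σ),
    ∃ s₀ ∈ S.init, ℓ ∈ S.outSet LU (S.after (s₀, []) σ)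

/-- A VPTS is deterministic: at most one initial state and each observable trace
reaches a unique configuration. -/
def Deterministic (M : VPTS L kind) : Prop :=
  M.init.Subsingleton ∧
  ∀ (σ : List L), ∀ s₀ ∈ M.init, ∀ s₀' ∈ M.init, ∀ c c',
    M.Obs (s₀, []) σ c → M.Obs (s₀', []) σ c' → c = c'

/-- The cross product of two VPTSs over a common alphabet: observable moves
synchronize, silent moves interleave. -/
def prod (M N : VPTS L kind) : VPTS L kind where
  State := M.State × N.State
  Stack := M.Stack × N.Stack
  fintypeState := inferInstance
  init := M.init ×ˢ N.init
  pushT := { t | (t.1.1, t.2.1, t.2.2.1.1, t.2.2.2.1) ∈ M.pushT ∧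
                 (t.1.2, t.2.1, t.2.2.1.2, t.2.2.2.2) ∈ N.pushT }
  popT := { t |
      match t.2.2.1 with
      | some Z => (t.1.1, t.2.1, some Z.1, t.2.2.2.1) ∈ M.popT ∧
                  (t.1.2, t.2.1, some Z.2, t.2.2.2.2) ∈ N.popT
      | none => (t.1.1, t.2.1, (none : Option M.Stack), t.2.2.2.1) ∈ M.popT ∧
                (t.1.2, t.2.1, (none : Option N.Stack), t.2.2.2.2) ∈ N.popT }
  intT := { t |
      match t.2.1 with
      | some a => (t.1.1, some a, t.2.2.1) ∈ M.intT ∧ (t.1.2, some a, t.2.2.2) ∈ N.intT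
      | none => (t.1.1 = t.2.2.1 ∧ (t.1.2, none, t.2.2.2) ∈ N.intT) ∨
                (t.1.2 = t.2.2.2 ∧ (t.1.1, none, t.2.2.1) ∈ M.intT) }
  push_call := fun _ _ _ _ h => M.push_call _ _ _ _ h.1
  pop_ret := by
    intro p a Z q h
    cases Z with
    | some Z => exact M.pop_ret _ _ _ _ h.1
    | none => exact M.pop_ret _ _ _ _ h.1
  int_simple := fun _ _ _ h => M.int_simple _ _ _ h.1

/-- `I` passes the fault model `(T, fail)`: no run of the cross product reaches
the `fail` state of `T`. -/
def Passes (T : VPTS L kind) (fail : T.State) (I : VPTS L kind) : Prop :=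
  ∀ (σ : List L), ∀ t₀ ∈ T.init, ∀ q₀ ∈ I.init, ∀ (q : I.State)
    (α : List (T.Stack × I.Stack)),
    ¬ (T.prod I).Obs ((t₀, q₀), []) σ ((fail, q), α)

/-- `Q` adheres to the test suite `T`. -/
def Adheres (Q : VPTS L kind) (T : Set (List L)) : Prop := Q.otr ∩ T = ∅

/-- `T` is a complete (sound and exhaustive) test suite for `S` and `(D,F)`. -/
def CompleteSuite (S : VPTS L kind) (D F : Set (List L)) (T : Set (List L)) : Prop :=
  ∀ I : VPTS L kind, (Adheres I T ↔ VConf I S D F)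

/-- The concatenation `otr(S)·LU`. -/
def otrConcat (S : VPTS L kind) (LU : Set L) : Set (List L) :=
  { w | ∃ σ ∈ S.otr, ∃ ℓ ∈ LU, w = σ ++ [ℓ] }

end VPTS

namespace VPTSAux

open VPTS

variable {L : Type} {kind : L → VPKind}

theorem obs_trans {M : VPTS L kind} :
    ∀ {c d σ}, M.Obs c σ d → ∀ {e τ}, M.Obs d τ e → M.Obs c (σ ++ τ) e := by
  intro c d σ h1
  induction h1 with
  | refl c => intro e τ h2; exact h2
  | push h _ ih => intro e τ h2; exact Obs.push h (ih h2)
  | pop h _ ih => intro e τ h2; exact Obs.pop h (ih h2)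
  | popEmpty h _ ih => intro e τ h2; exact Obs.popEmpty h (ih h2)
  | int h _ ih => intro e τ h2; exact Obs.int h (ih h2)
  | silent h _ ih => intro e τ h2; exact Obs.silent h (ih h2)

theorem obs_split {M : VPTS L kind} :
    ∀ {c τ e}, M.Obs c τ e → ∀ σ₁ σ₂, τ = σ₁ ++ σ₂ →
      ∃ d, M.Obs c σ₁ d ∧ M.Obs d σ₂ e := by
  intro c τ e h
  induction h with
  | refl c =>
    intro σ₁ σ₂ hτ
    obtain ⟨h1, h2⟩ := List.append_eq_nil_iff.mp hτ.symm
    subst h1; subst h2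
    exact ⟨c, Obs.refl c, Obs.refl c⟩
  | push h hrest ih =>
    intro σ₁ σ₂ hτ
    cases σ₁ with
    | nil =>
      refine ⟨_, Obs.refl _, ?_⟩
      rw [List.nil_append] at hτ; subst hτ
      exact Obs.push h hrest
    | cons b σ₁' =>
      rw [List.cons_append] at hτ
      injection hτ with h1 hσ; subst h1
      obtain ⟨d, h1, h2⟩ := ih σ₁' σ₂ hσ
      exact ⟨d, Obs.push h h1, h2⟩
  | pop h hrest ih =>
    intro σ₁ σ₂ hτ
    cases σ₁ with
    | nil =>
      refine ⟨_, Obs.refl _, ?_⟩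
      rw [List.nil_append] at hτ; subst hτ
      exact Obs.pop h hrest
    | cons b σ₁' =>
      rw [List.cons_append] at hτ
      injection hτ with h1 hσ; subst h1
      obtain ⟨d, h1, h2⟩ := ih σ₁' σ₂ hσ
      exact ⟨d, Obs.pop h h1, h2⟩
  | popEmpty h hrest ih =>
    intro σ₁ σ₂ hτ
    cases σ₁ with
    | nil =>
      refine ⟨_, Obs.refl _, ?_⟩
      rw [List.nil_append] at hτ; subst hτ
      exact Obs.popEmpty h hrest
    | cons b σ₁' =>
      rw [List.cons_append] at hτ
      injection hτ with h1 hσ; subst h1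
      obtain ⟨d, h1, h2⟩ := ih σ₁' σ₂ hσ
      exact ⟨d, Obs.popEmpty h h1, h2⟩
  | int h hrest ih =>
    intro σ₁ σ₂ hτ
    cases σ₁ with
    | nil =>
      refine ⟨_, Obs.refl _, ?_⟩
      rw [List.nil_append] at hτ; subst hτ
      exact Obs.int h hrest
    | cons b σ₁' =>
      rw [List.cons_append] at hτ
      injection hτ with h1 hσ; subst h1
      obtain ⟨d, h1, h2⟩ := ih σ₁' σ₂ hσ
      exact ⟨d, Obs.int h h1, h2⟩
  | silent h hrest ih =>
    intro σ₁ σ₂ hτ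
    obtain ⟨d, h1, h2⟩ := ih σ₁ σ₂ hτ
    exact ⟨d, Obs.silent h h1, h2⟩

/-- A single visible step. -/
def VStep (M : VPTS L kind) (c : M.Conf) (a : L) (c' : M.Conf) : Prop :=
  (∃ Z, (c.1, a, Z, c'.1) ∈ M.pushT ∧ c'.2 = Z :: c.2) ∨
  (∃ Z α, (c.1, a, some Z, c'.1) ∈ M.popT ∧ c.2 = Z :: α ∧ c'.2 = α) ∨
  ((c.1, a, none, c'.1) ∈ M.popT ∧ c.2 = [] ∧ c'.2 = []) ∨
  ((c.1, some a, c'.1) ∈ M.intT ∧ c'.2 = c.2)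

theorem vstep_obs {M : VPTS L kind} {d a d'} (h : VStep M d a d') : M.Obs d [a] d' := by
  obtain ⟨p, α⟩ := d; obtain ⟨q, β⟩ := d'
  rcases h with ⟨Z, hm, hβ⟩ | ⟨Z, α', hm, hα, hβ⟩ | ⟨hm, hα, hβ⟩ | ⟨hm, hβ⟩
  · dsimp at hm hβ; subst hβ; exact Obs.push hm (Obs.refl _)
  · dsimp at hm hα hβ; subst hα; subst hβ; exact Obs.pop hm (Obs.refl _)
  · dsimp at hm hα hβ; subst hα; subst hβ; exact Obs.popEmpty hm (Obs.refl _)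
  · dsimp at hm hβ; subst hβ; exact Obs.int hm (Obs.refl _)

theorem obs_cons {M : VPTS L kind} :
    ∀ {c τ e}, M.Obs c τ e → ∀ a σ, τ = a :: σ →
      ∃ d d', M.Obs c [] d ∧ VStep M d a d' ∧ M.Obs d' σ e := by
  intro c τ e h
  induction h with
  | refl c => intro a σ hτ; exact absurd hτ (by simp)
  | @push p q b Z α σ' c hm hrest ih =>
    intro a σ hτ
    injection hτ with h1 h2; subst h1; subst h2
    exact ⟨(p, α), (q, Z :: α), Obs.refl _, Or.inl ⟨Z, hm, rfl⟩, hrest⟩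
  | @pop p q b Z α σ' c hm hrest ih =>
    intro a σ hτ
    injection hτ with h1 h2; subst h1; subst h2
    exact ⟨(p, Z :: α), (q, α), Obs.refl _, Or.inr (Or.inl ⟨Z, α, hm, rfl, rfl⟩), hrest⟩
  | @popEmpty p q b σ' c hm hrest ih =>
    intro a σ hτ
    injection hτ with h1 h2; subst h1; subst h2
    exact ⟨(p, []), (q, []), Obs.refl _, Or.inr (Or.inr (Or.inl ⟨hm, rfl, rfl⟩)), hrest⟩
  | @int p q b α σ' c hm hrest ih =>
    intro a σ hτ
    injection hτ with h1 h2; subst h1; subst h2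
    exact ⟨(p, α), (q, α), Obs.refl _, Or.inr (Or.inr (Or.inr ⟨hm, rfl⟩)), hrest⟩
  | silent hm hrest ih =>
    intro a σ hτ
    obtain ⟨d, d', h1, h2, h3⟩ := ih a σ hτ
    exact ⟨d, d', Obs.silent hm h1, h2, h3⟩

theorem obs_nil_stack {M : VPTS L kind} :
    ∀ {c τ e}, M.Obs c τ e → τ = [] → e.2 = c.2 := by
  intro c τ e h
  induction h with
  | refl c => intro _; rfl
  | push hm hrest ih => intro hτ; exact absurd hτ (by simp)
  | pop hm hrest ih => intro hτ; exact absurd hτ (by simp)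
  | popEmpty hm hrest ih => intro hτ; exact absurd hτ (by simp)
  | int hm hrest ih => intro hτ; exact absurd hτ (by simp)
  | silent hm hrest ih => intro hτ; exact ih hτ

theorem silent_liftL {M N : VPTS L kind} :
    ∀ {c τ c'}, M.Obs c τ c' → τ = [] → ∀ (n : N.State) (γ : List (M.Stack × N.Stack)),
      (M.prod N).Obs ((c.1, n), γ) [] ((c'.1, n), γ) := by
  intro c τ c' h
  induction h with
  | refl c => intro _ n γ; exact Obs.refl _
  | push hm hrest ih => intro hτ; exact absurd hτ (by simp)
  | pop hm hrest ih => intro hτ; exact absurd hτ (by simp)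
  | popEmpty hm hrest ih => intro hτ; exact absurd hτ (by simp)
  | int hm hrest ih => intro hτ; exact absurd hτ (by simp)
  | @silent p q α σ c hm hrest ih =>
    intro hτ n γ
    have ih' : (M.prod N).Obs ((q, n), γ) [] ((c.1, n), γ) := ih hτ n γ
    show (M.prod N).Obs ((p, n), γ) [] ((c.1, n), γ)
    refine Obs.silent ?_ ih'
    exact Or.inr ⟨rfl, hm⟩

theorem silent_liftR {M N : VPTS L kind} :
    ∀ {c τ c'}, N.Obs c τ c' → τ = [] → ∀ (m : M.State) (γ : List (M.Stack × N.Stack)),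
      (M.prod N).Obs ((m, c.1), γ) [] ((m, c'.1), γ) := by
  intro c τ c' h
  induction h with
  | refl c => intro _ m γ; exact Obs.refl _
  | push hm hrest ih => intro hτ; exact absurd hτ (by simp)
  | pop hm hrest ih => intro hτ; exact absurd hτ (by simp)
  | popEmpty hm hrest ih => intro hτ; exact absurd hτ (by simp)
  | int hm hrest ih => intro hτ; exact absurd hτ (by simp)
  | @silent p q α σ c hm hrest ih =>
    intro hτ m γ
    have ih' : (M.prod N).Obs ((m, q), γ) [] ((m, c.1), γ) := ih hτ m γ
    show (M.prod N).Obs ((m, p), γ) [] ((m, c.1), γ)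
    refine Obs.silent ?_ ih'
    exact Or.inl ⟨rfl, hm⟩

theorem prod_obs {M N : VPTS L kind} :
    ∀ (σ : List L) {m α n β m' α' n' β'},
      M.Obs (m, α) σ (m', α') → N.Obs (n, β) σ (n', β') → α.length = β.length →
      (M.prod N).Obs ((m, n), α.zip β) σ ((m', n'), α'.zip β') ∧ α'.length = β'.length := by
  intro σ
  induction σ with
  | nil =>
    intro m α n β m' α' n' β' h1 h2 hlen
    have e1 : α = α' := (obs_nil_stack h1 rfl).symm
    have e2 : β = β' := (obs_nil_stack h2 rfl).symm
    subst e1; subst e2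
    refine ⟨?_, hlen⟩
    have p1 : (M.prod N).Obs ((m, n), α.zip β) [] ((m', n), α.zip β) :=
      silent_liftL h1 rfl n (α.zip β)
    have p2 : (M.prod N).Obs ((m', n), α.zip β) [] ((m', n'), α.zip β) :=
      silent_liftR h2 rfl m' (α.zip β)
    exact obs_trans p1 p2
  | cons a σ ih =>
    intro m α n β m' α' n' β' h1 h2 hlen
    obtain ⟨d1, d1', hc1, hv1, hr1⟩ := obs_cons h1 a σ rfl
    obtain ⟨d2, d2', hc2, hv2, hr2⟩ := obs_cons h2 a σ rfl
    obtain ⟨m₁, α₁⟩ := d1; obtain ⟨m₂, α₂⟩ := d1'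
    obtain ⟨n₁, β₁⟩ := d2; obtain ⟨n₂, β₂⟩ := d2'
    have eα : α = α₁ := (obs_nil_stack hc1 rfl).symm
    have eβ : β = β₁ := (obs_nil_stack hc2 rfl).symm
    subst eα; subst eβ
    have p1 : (M.prod N).Obs ((m, n), α.zip β) [] ((m₁, n), α.zip β) :=
      silent_liftL hc1 rfl n (α.zip β)
    have p2 : (M.prod N).Obs ((m₁, n), α.zip β) [] ((m₁, n₁), α.zip β) :=
      silent_liftR hc2 rfl m₁ (α.zip β)
    have glue : ∀ {e}, (M.prod N).Obs ((m₁, n₁), α.zip β) (a :: σ) e →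
        (M.prod N).Obs ((m, n), α.zip β) (a :: σ) e := by
      intro e h
      exact obs_trans p1 (obs_trans p2 h)
    rcases hv1 with ⟨Z, hm1, hs1⟩ | ⟨Z, α₃, hm1, hs1, hs1'⟩ | ⟨hm1, hs1, hs1'⟩ | ⟨hm1, hs1⟩ <;>
      rcases hv2 with ⟨W, hm2, hs2⟩ | ⟨W, β₃, hm2, hs2, hs2'⟩ | ⟨hm2, hs2, hs2'⟩ | ⟨hm2, hs2⟩ <;>
      dsimp at hm1 hs1 hm2 hs2
    -- push / push
    · subst hs1; subst hs2
      obtain ⟨hO, hL⟩ := ih hr1 hr2 (by simp [hlen])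
      exact ⟨glue (Obs.push ⟨hm1, hm2⟩ hO), hL⟩
    -- push / pop : kind clash
    · exact absurd ((M.push_call _ _ _ _ hm1).symm.trans (N.pop_ret _ _ _ _ hm2)) (by simp)
    · exact absurd ((M.push_call _ _ _ _ hm1).symm.trans (N.pop_ret _ _ _ _ hm2)) (by simp)
    · exact absurd ((M.push_call _ _ _ _ hm1).symm.trans (N.int_simple _ _ _ hm2)) (by simp)
    · exact absurd ((M.pop_ret _ _ _ _ hm1).symm.trans (N.push_call _ _ _ _ hm2)) (by simp)
    -- pop(some)/pop(some)
    · dsimp at hs1' hs2'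
      subst hs1'; subst hs2'; subst hs1; subst hs2
      have hlen' : α₂.length = β₂.length := by simpa using hlen
      obtain ⟨hO, hL⟩ := ih hr1 hr2 hlen'
      refine ⟨glue ?_, hL⟩
      show (M.prod N).Obs ((m₁, n₁), (Z, W) :: α₂.zip β₂) (a :: σ) ((m', n'), α'.zip β')
      refine Obs.pop ?_ hO
      exact ⟨hm1, hm2⟩
    -- pop(some)/pop(empty): length clash
    · subst hs1; subst hs2; simp at hlen
    · exact absurd ((M.pop_ret _ _ _ _ hm1).symm.trans (N.int_simple _ _ _ hm2)) (by simp)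
    · exact absurd ((M.pop_ret _ _ _ _ hm1).symm.trans (N.push_call _ _ _ _ hm2)) (by simp)
    · subst hs1; subst hs2; simp at hlen
    -- popEmpty / popEmpty
    · dsimp at hs1' hs2'
      subst hs1'; subst hs2'; subst hs1; subst hs2
      obtain ⟨hO, hL⟩ := ih hr1 hr2 rfl
      refine ⟨glue ?_, hL⟩
      show (M.prod N).Obs ((m₁, n₁), []) (a :: σ) ((m', n'), α'.zip β')
      have hO' : (M.prod N).Obs ((m₂, n₂), []) σ ((m', n'), α'.zip β') := hO
      refine Obs.popEmpty ?_ hO'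
      exact ⟨hm1, hm2⟩
    · exact absurd ((M.pop_ret _ _ _ _ hm1).symm.trans (N.int_simple _ _ _ hm2)) (by simp)
    · exact absurd ((M.int_simple _ _ _ hm1).symm.trans (N.push_call _ _ _ _ hm2)) (by simp)
    · exact absurd ((M.int_simple _ _ _ hm1).symm.trans (N.pop_ret _ _ _ _ hm2)) (by simp)
    · exact absurd ((M.int_simple _ _ _ hm1).symm.trans (N.pop_ret _ _ _ _ hm2)) (by simp)
    -- int / int
    · subst hs1; subst hs2
      obtain ⟨hO, hL⟩ := ih hr1 hr2 hlen
      exact ⟨glue (Obs.int ⟨hm1, hm2⟩ hO), hL⟩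

theorem prod_projL {M N : VPTS L kind} :
    ∀ {c σ c'}, (M.prod N).Obs c σ c' →
      M.Obs (c.1.1, c.2.map Prod.fst) σ (c'.1.1, c'.2.map Prod.fst) := by
  intro c σ c' h
  induction h with
  | refl c => exact Obs.refl _
  | @push p q a Z α σ c hm hrest ih => exact Obs.push hm.1 ih
  | @pop p q a Z α σ c hm hrest ih => exact Obs.pop hm.1 ih
  | @popEmpty p q a σ c hm hrest ih => exact Obs.popEmpty hm.1 ih
  | @int p q a α σ c hm hrest ih => exact Obs.int hm.1 ih
  | @silent p q α σ c hm hrest ih =>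
    rcases hm with ⟨hpq, _⟩ | ⟨_, hM⟩
    · dsimp at hpq ih ⊢; rw [hpq]; exact ih
    · exact Obs.silent hM ih

theorem prod_projR {M N : VPTS L kind} :
    ∀ {c σ c'}, (M.prod N).Obs c σ c' →
      N.Obs (c.1.2, c.2.map Prod.snd) σ (c'.1.2, c'.2.map Prod.snd) := by
  intro c σ c' h
  induction h with
  | refl c => exact Obs.refl _
  | @push p q a Z α σ c hm hrest ih => exact Obs.push hm.2 ih
  | @pop p q a Z α σ c hm hrest ih => exact Obs.pop hm.2 ih
  | @popEmpty p q a σ c hm hrest ih => exact Obs.popEmpty hm.2 ih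
  | @int p q a α σ c hm hrest ih => exact Obs.int hm.2 ih
  | @silent p q α σ c hm hrest ih =>
    rcases hm with ⟨_, hN⟩ | ⟨hpq, _⟩
    · exact Obs.silent hN ih
    · dsimp at hpq ih ⊢; rw [hpq]; exact ih

/-- The fault model: a copy of `S` plus a `fail` state (`none`), with transitions to
`fail` on every output in `LU` that `S` does not enable. -/
abbrev faultT (LU : Set L) (S : VPTS L kind) : VPTS L kind where
  State := Option S.State
  Stack := Option S.Stack
  fintypeState := inferInstance
  init := { t | ∃ s ∈ S.init, t = some s }
  pushT := { t | (∃ p a Z q, (p, a, Z, q) ∈ S.pushT ∧ t = (some p, a, some Z, some q)) ∨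
      (∃ p ℓ, ℓ ∈ LU ∧ kind ℓ = VPKind.call ∧ (¬ ∃ Z q, (p, ℓ, Z, q) ∈ S.pushT) ∧
        t = (some p, ℓ, none, none)) }
  popT := { t | (∃ p a Z q, (p, a, some Z, q) ∈ S.popT ∧ t = (some p, a, some (some Z), some q)) ∨
      (∃ p a q, (p, a, none, q) ∈ S.popT ∧ t = (some p, a, none, some q)) ∨
      (∃ p ℓ Z, ℓ ∈ LU ∧ kind ℓ = VPKind.ret ∧ (¬ ∃ q, (p, ℓ, some Z, q) ∈ S.popT) ∧
        t = (some p, ℓ, some (some Z), none)) ∨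
      (∃ p ℓ, ℓ ∈ LU ∧ kind ℓ = VPKind.ret ∧
        (¬ ∃ q, (p, ℓ, (none : Option S.Stack), q) ∈ S.popT) ∧
        t = (some p, ℓ, none, none)) }
  intT := { t | (∃ p x q, (p, x, q) ∈ S.intT ∧ t = (some p, x, some q)) ∨
      (∃ p ℓ, ℓ ∈ LU ∧ kind ℓ = VPKind.intern ∧ (¬ ∃ q, (p, some ℓ, q) ∈ S.intT) ∧
        t = (some p, some ℓ, none)) }
  push_call := by
    rintro p a Z q (⟨p', a', Z', q', h, heq⟩ | ⟨p', ℓ, h1, h2, h3, heq⟩) <;>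
      simp only [Prod.mk.injEq] at heq
    · obtain ⟨-, rfl, -, -⟩ := heq; exact S.push_call _ _ _ _ h
    · obtain ⟨-, rfl, -, -⟩ := heq; exact h2
  pop_ret := by
    rintro p a Z q (⟨p', a', Z', q', h, heq⟩ | ⟨p', a', q', h, heq⟩ |
        ⟨p', ℓ, Z', h1, h2, h3, heq⟩ | ⟨p', ℓ, h1, h2, h3, heq⟩) <;>
      simp only [Prod.mk.injEq] at heq
    · obtain ⟨-, rfl, -, -⟩ := heq; exact S.pop_ret _ _ _ _ h
    · obtain ⟨-, rfl, -, -⟩ := heq; exact S.pop_ret _ _ _ _ h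
    · obtain ⟨-, rfl, -, -⟩ := heq; exact h2
    · obtain ⟨-, rfl, -, -⟩ := heq; exact h2
  int_simple := by
    rintro p a q (⟨p', x, q', h, heq⟩ | ⟨p', ℓ, h1, h2, h3, heq⟩) <;>
      simp only [Prod.mk.injEq] at heq
    · obtain ⟨-, hx, -⟩ := heq; exact S.int_simple _ _ _ (hx ▸ h)
    · obtain ⟨-, hx, -⟩ := heq
      injection hx with hx; subst hx; exact h2

theorem lift_obs (LU : Set L) (S : VPTS L kind) :
    ∀ {c σ c'}, S.Obs c σ c' →
      (faultT LU S).Obs (some c.1, c.2.map some) σ (some c'.1, c'.2.map some) := by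
  intro c σ c' h
  induction h with
  | refl c => exact Obs.refl _
  | @push p q a Z α σ c hm hrest ih =>
    have ih' : (faultT LU S).Obs (some q, some Z :: α.map some) σ
        (some c.1, c.2.map some) := ih
    show (faultT LU S).Obs (some p, α.map some) (a :: σ) (some c.1, c.2.map some)
    exact Obs.push (Or.inl ⟨p, a, Z, q, hm, rfl⟩) ih'
  | @pop p q a Z α σ c hm hrest ih =>
    have ih' : (faultT LU S).Obs (some q, α.map some) σ (some c.1, c.2.map some) := ih
    show (faultT LU S).Obs (some p, some Z :: α.map some) (a :: σ) (some c.1, c.2.map some)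
    exact Obs.pop (Or.inl ⟨p, a, Z, q, hm, rfl⟩) ih'
  | @popEmpty p q a σ c hm hrest ih =>
    have ih' : (faultT LU S).Obs (some q, []) σ (some c.1, c.2.map some) := ih
    show (faultT LU S).Obs (some p, []) (a :: σ) (some c.1, c.2.map some)
    exact Obs.popEmpty (Or.inr (Or.inl ⟨p, a, q, hm, rfl⟩)) ih'
  | @int p q a α σ c hm hrest ih =>
    have ih' : (faultT LU S).Obs (some q, α.map some) σ (some c.1, c.2.map some) := ih
    show (faultT LU S).Obs (some p, α.map some) (a :: σ) (some c.1, c.2.map some)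
    exact Obs.int (Or.inl ⟨p, some a, q, hm, rfl⟩) ih'
  | @silent p q α σ c hm hrest ih =>
    have ih' : (faultT LU S).Obs (some q, α.map some) σ (some c.1, c.2.map some) := ih
    show (faultT LU S).Obs (some p, α.map some) σ (some c.1, c.2.map some)
    exact Obs.silent (Or.inl ⟨p, none, q, hm, rfl⟩) ih'

theorem fail_no_out (LU : Set L) (S : VPTS L kind) :
    ∀ {c σ c'}, (faultT LU S).Obs c σ c' → c.1 = none → σ = [] ∧ c' = c := by
  intro c σ c' h
  induction h with
  | refl c => intro _; exact ⟨rfl, rfl⟩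
  | @push p q a Z α σ c hm hrest ih =>
    intro h; dsimp at h; subst h
    rcases hm with ⟨p', a', Z', q', _, heq⟩ | ⟨p', ℓ, _, _, _, heq⟩ <;>
      simp [Prod.mk.injEq] at heq
  | @pop p q a Z α σ c hm hrest ih =>
    intro h; dsimp at h; subst h
    rcases hm with ⟨p', a', Z', q', _, heq⟩ | ⟨p', a', q', _, heq⟩ |
        ⟨p', ℓ, Z', _, _, _, heq⟩ | ⟨p', ℓ, _, _, _, heq⟩ <;>
      simp [Prod.mk.injEq] at heq
  | @popEmpty p q a σ c hm hrest ih =>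
    intro h; dsimp at h; subst h
    rcases hm with ⟨p', a', Z', q', _, heq⟩ | ⟨p', a', q', _, heq⟩ |
        ⟨p', ℓ, Z', _, _, _, heq⟩ | ⟨p', ℓ, _, _, _, heq⟩ <;>
      simp [Prod.mk.injEq] at heq
  | @int p q a α σ c hm hrest ih =>
    intro h; dsimp at h; subst h
    rcases hm with ⟨p', x, q', _, heq⟩ | ⟨p', ℓ, _, _, _, heq⟩ <;>
      simp [Prod.mk.injEq] at heq
  | @silent p q α σ c hm hrest ih =>
    intro h; dsimp at h; subst h
    rcases hm with ⟨p', x, q', _, heq⟩ | ⟨p', ℓ, _, _, _, heq⟩ <;>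
      simp [Prod.mk.injEq] at heq

/-- The shape of a configuration just after a `fail`-transition fired at state `s`
with remaining specification stack `α` on label `ℓ`. -/
def FailAt (LU : Set L) (S : VPTS L kind) (s : S.State) (α : List S.Stack) (ℓ : L)
    (c : (faultT LU S).Conf) : Prop :=
  (kind ℓ = VPKind.call ∧ (¬ ∃ Z q, (s, ℓ, Z, q) ∈ S.pushT) ∧
    c = (none, none :: α.map some)) ∨
  (kind ℓ = VPKind.intern ∧ (¬ ∃ q, (s, some ℓ, q) ∈ S.intT) ∧ c = (none, α.map some)) ∨
  (∃ Z α', α = Z :: α' ∧ kind ℓ = VPKind.ret ∧ (¬ ∃ q, (s, ℓ, some Z, q) ∈ S.popT) ∧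
    c = (none, α'.map some)) ∨
  (α = [] ∧ kind ℓ = VPKind.ret ∧
    (¬ ∃ q, (s, ℓ, (none : Option S.Stack), q) ∈ S.popT) ∧ c = (none, []))

theorem t_back (LU : Set L) (S : VPTS L kind) :
    ∀ {c σ c'}, (faultT LU S).Obs c σ c' →
      ∀ s α, c = (some s, α.map some) →
        (∃ s' α', S.Obs (s, α) σ (s', α') ∧ c' = (some s', α'.map some)) ∨
        (∃ σ' ℓ s' α', σ = σ' ++ [ℓ] ∧ S.Obs (s, α) σ' (s', α') ∧ ℓ ∈ LU ∧
          FailAt LU S s' α' ℓ c') := by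
  intro c σ c' h
  induction h with
  | refl c => intro s α hc; exact Or.inl ⟨s, α, Obs.refl _, hc⟩
  | @push p q a Z αT σ c hm hrest ih =>
    intro s α hc
    simp only [Prod.mk.injEq] at hc
    obtain ⟨rfl, rfl⟩ := hc
    rcases hm with ⟨p', a', Z', q', hS, heq⟩ | ⟨p', ℓ, hLU, hk, hne, heq⟩ <;>
      simp only [Prod.mk.injEq, Option.some.injEq] at heq
    · obtain ⟨hps, rfl, rfl, rfl⟩ := heq
      obtain rfl : s = p' := hps
      rcases ih q' (Z' :: α) rfl with ⟨s', α', hS', hc'⟩ | ⟨σ₁, ℓ, s', α', hσ, hS', hLU, hF⟩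
      · exact Or.inl ⟨s', α', Obs.push hS hS', hc'⟩
      · exact Or.inr ⟨a :: σ₁, ℓ, s', α', by rw [hσ]; rfl, Obs.push hS hS', hLU, hF⟩
    · obtain ⟨hps, rfl, rfl, rfl⟩ := heq
      obtain rfl : s = p' := hps
      obtain ⟨rfl, h2⟩ := fail_no_out LU S hrest rfl
      exact Or.inr ⟨[], a, s, α, rfl, Obs.refl _, hLU,
        Or.inl ⟨hk, hne, by rw [h2]⟩⟩
  | @pop p q a Z αT σ c hm hrest ih =>
    intro s α hc
    cases α with
    | nil => simp [Prod.mk.injEq] at hc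
    | cons A α₀ =>
      simp only [List.map_cons, Prod.mk.injEq, List.cons.injEq] at hc
      obtain ⟨rfl, rfl, rfl⟩ := hc
      rcases hm with ⟨p', a', Z', q', hS, heq⟩ | ⟨p', a', q', hS, heq⟩ |
          ⟨p', ℓ, Z', hLU, hk, hne, heq⟩ | ⟨p', ℓ, hLU, hk, hne, heq⟩ <;>
        simp only [Prod.mk.injEq, Option.some.injEq] at heq
      · obtain ⟨hps, rfl, hzz, rfl⟩ := heq
        obtain rfl : s = p' := hps
        obtain rfl : A = Z' := hzz
        rcases ih q' α₀ rfl with ⟨s', α', hS', hc'⟩ | ⟨σ₁, ℓ, s', α', hσ, hS', hLU, hF⟩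
        · exact Or.inl ⟨s', α', Obs.pop hS hS', hc'⟩
        · exact Or.inr ⟨a :: σ₁, ℓ, s', α', by rw [hσ]; rfl, Obs.pop hS hS', hLU, hF⟩
      · exact absurd heq.2.2.1 (by simp)
      · obtain ⟨hps, rfl, hzz, rfl⟩ := heq
        obtain rfl : s = p' := hps
        obtain rfl : A = Z' := hzz
        obtain ⟨rfl, h2⟩ := fail_no_out LU S hrest rfl
        exact Or.inr ⟨[], a, s, A :: α₀, rfl, Obs.refl _, hLU,
          Or.inr (Or.inr (Or.inl ⟨A, α₀, rfl, hk, hne, by rw [h2]⟩))⟩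
      · exact absurd heq.2.2.1 (by simp)
  | @popEmpty p q a σ c hm hrest ih =>
    intro s α hc
    cases α with
    | cons A α₀ => simp [Prod.mk.injEq] at hc
    | nil =>
      simp only [List.map_nil, Prod.mk.injEq] at hc
      obtain ⟨rfl, -⟩ := hc
      rcases hm with ⟨p', a', Z', q', hS, heq⟩ | ⟨p', a', q', hS, heq⟩ |
          ⟨p', ℓ, Z', hLU, hk, hne, heq⟩ | ⟨p', ℓ, hLU, hk, hne, heq⟩ <;>
        simp only [Prod.mk.injEq, Option.some.injEq] at heq
      · exact absurd heq.2.2.1 (by simp)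
      · obtain ⟨hps, rfl, -, rfl⟩ := heq
        obtain rfl : s = p' := hps
        rcases ih q' [] rfl with ⟨s', α', hS', hc'⟩ | ⟨σ₁, ℓ, s', α', hσ, hS', hLU, hF⟩
        · exact Or.inl ⟨s', α', Obs.popEmpty hS hS', hc'⟩
        · exact Or.inr ⟨a :: σ₁, ℓ, s', α', by rw [hσ]; rfl, Obs.popEmpty hS hS', hLU, hF⟩
      · exact absurd heq.2.2.1 (by simp)
      · obtain ⟨hps, rfl, -, rfl⟩ := heq
        obtain rfl : s = p' := hps
        obtain ⟨rfl, h2⟩ := fail_no_out LU S hrest rfl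
        exact Or.inr ⟨[], a, s, [], rfl, Obs.refl _, hLU,
          Or.inr (Or.inr (Or.inr ⟨rfl, hk, hne, by rw [h2]⟩))⟩
  | @int p q a αT σ c hm hrest ih =>
    intro s α hc
    simp only [Prod.mk.injEq] at hc
    obtain ⟨rfl, rfl⟩ := hc
    rcases hm with ⟨p', x, q', hS, heq⟩ | ⟨p', ℓ, hLU, hk, hne, heq⟩ <;>
      simp only [Prod.mk.injEq, Option.some.injEq] at heq
    · obtain ⟨hps, hx, rfl⟩ := heq
      obtain rfl : s = p' := hps
      subst hx
      rcases ih q' α rfl with ⟨s', α', hS', hc'⟩ | ⟨σ₁, ℓ, s', α', hσ, hS', hLU, hF⟩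
      · exact Or.inl ⟨s', α', Obs.int hS hS', hc'⟩
      · exact Or.inr ⟨a :: σ₁, ℓ, s', α', by rw [hσ]; rfl, Obs.int hS hS', hLU, hF⟩
    · obtain ⟨hps, rfl, rfl⟩ := heq
      obtain rfl : s = p' := hps
      obtain ⟨rfl, h2⟩ := fail_no_out LU S hrest rfl
      exact Or.inr ⟨[], a, s, α, rfl, Obs.refl _, hLU,
        Or.inr (Or.inl ⟨hk, hne, by rw [h2]⟩)⟩
  | @silent p q αT σ c hm hrest ih =>
    intro s α hc
    simp only [Prod.mk.injEq] at hc
    obtain ⟨rfl, rfl⟩ := hc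
    rcases hm with ⟨p', x, q', hS, heq⟩ | ⟨p', ℓ, hLU, hk, hne, heq⟩ <;>
      simp only [Prod.mk.injEq, Option.some.injEq] at heq
    · obtain ⟨hps, hx, rfl⟩ := heq
      obtain rfl : s = p' := hps
      subst hx
      rcases ih q' α rfl with ⟨s', α', hS', hc'⟩ | ⟨σ₁, ℓ, s', α', hσ, hS', hLU, hF⟩
      · exact Or.inl ⟨s', α', Obs.silent hS hS', hc'⟩
      · exact Or.inr ⟨σ₁, ℓ, s', α', hσ, Obs.silent hS hS', hLU, hF⟩
    · exact absurd heq.2.1 (by simp)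

theorem det_silent {S : VPTS L kind} (hdet : S.Deterministic) {s₀ σ c d}
    (h0 : s₀ ∈ S.init) (h : S.Obs (s₀, []) σ c) (h2 : S.Obs c [] d) : d = c := by
  have h3 := obs_trans h h2
  rw [List.append_nil] at h3
  exact hdet.2 σ s₀ h0 s₀ h0 d c h3 h

/-- `ℓ` is enabled at `(s, α)` by a single visible transition. -/
def Direct (S : VPTS L kind) (s : S.State) (α : List S.Stack) (ℓ : L) : Prop :=
  (∃ Z q, (s, ℓ, Z, q) ∈ S.pushT) ∨ (∃ q, (s, some ℓ, q) ∈ S.intT) ∨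
  (∃ Z α' q, α = Z :: α' ∧ (s, ℓ, some Z, q) ∈ S.popT) ∨
  (α = [] ∧ ∃ q, (s, ℓ, (none : Option S.Stack), q) ∈ S.popT)

theorem direct_of_enabled {S : VPTS L kind} (hdet : S.Deterministic) {s₀ σ s α ℓ c'}
    (h0 : s₀ ∈ S.init) (hreach : S.Obs (s₀, []) σ (s, α)) (h : S.Obs (s, α) [ℓ] c') :
    Direct S s α ℓ := by
  obtain ⟨d, d', hc, hv, -⟩ := obs_cons h ℓ [] rfl
  have hd : d = (s, α) := det_silent hdet h0 hreach hc
  subst hd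
  rcases hv with ⟨Z, hm, -⟩ | ⟨Z, α', hm, hα, -⟩ | ⟨hm, hα, -⟩ | ⟨hm, -⟩
  · exact Or.inl ⟨Z, d'.1, hm⟩
  · exact Or.inr (Or.inr (Or.inl ⟨Z, α', d'.1, hα, hm⟩))
  · exact Or.inr (Or.inr (Or.inr ⟨hα, d'.1, hm⟩))
  · exact Or.inr (Or.inl ⟨d'.1, hm⟩)

theorem enabled_of_direct {S : VPTS L kind} {s α ℓ} (h : Direct S s α ℓ) :
    ∃ c', S.Obs (s, α) [ℓ] c' := by
  rcases h with ⟨Z, q, hm⟩ | ⟨q, hm⟩ | ⟨Z, α', q, rfl, hm⟩ | ⟨rfl, q, hm⟩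
  · exact ⟨(q, Z :: α), Obs.push hm (Obs.refl _)⟩
  · exact ⟨(q, α), Obs.int hm (Obs.refl _)⟩
  · exact ⟨(q, α'), Obs.pop hm (Obs.refl _)⟩
  · exact ⟨(q, []), Obs.popEmpty hm (Obs.refl _)⟩

theorem not_direct_of_fail {LU : Set L} {S : VPTS L kind} {s α ℓ c}
    (hF : FailAt LU S s α ℓ c) : ¬ Direct S s α ℓ := by
  intro hD
  rcases hF with ⟨hk, hne, -⟩ | ⟨hk, hne, -⟩ | ⟨Z, α', hα, hk, hne, -⟩ | ⟨hα, hk, hne, -⟩ <;>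
    rcases hD with ⟨Z', q, hm⟩ | ⟨q, hm⟩ | ⟨Z₁, α₁, q, hα₁, hm⟩ | ⟨hα₁, q, hm⟩
  · exact hne ⟨Z', q, hm⟩
  · exact VPKind.noConfusion ((S.int_simple _ _ _ hm).symm.trans hk)
  · exact VPKind.noConfusion ((S.pop_ret _ _ _ _ hm).symm.trans hk)
  · exact VPKind.noConfusion ((S.pop_ret _ _ _ _ hm).symm.trans hk)
  · exact VPKind.noConfusion ((S.push_call _ _ _ _ hm).symm.trans hk)
  · exact hne ⟨q, hm⟩
  · exact VPKind.noConfusion ((S.pop_ret _ _ _ _ hm).symm.trans hk)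
  · exact VPKind.noConfusion ((S.pop_ret _ _ _ _ hm).symm.trans hk)
  · exact VPKind.noConfusion ((S.push_call _ _ _ _ hm).symm.trans hk)
  · exact VPKind.noConfusion ((S.int_simple _ _ _ hm).symm.trans hk)
  · rw [hα] at hα₁
    injection hα₁ with h1 h2
    subst h1
    exact hne ⟨q, hm⟩
  · rw [hα] at hα₁; exact absurd hα₁ (by simp)
  · exact VPKind.noConfusion ((S.push_call _ _ _ _ hm).symm.trans hk)
  · exact VPKind.noConfusion ((S.int_simple _ _ _ hm).symm.trans hk)
  · rw [hα] at hα₁; exact absurd hα₁ (by simp)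
  · exact hne ⟨q, hm⟩

theorem fail_unique {LU : Set L} {S : VPTS L kind} {s α ℓ c c'}
    (h1 : FailAt LU S s α ℓ c) (h2 : FailAt LU S s α ℓ c') : c = c' := by
  rcases h1 with ⟨hk1, -, rfl⟩ | ⟨hk1, -, rfl⟩ | ⟨Z1, α1, hα1, hk1, -, rfl⟩ |
      ⟨hα1, hk1, -, rfl⟩ <;>
    rcases h2 with ⟨hk2, -, rfl⟩ | ⟨hk2, -, rfl⟩ | ⟨Z2, α2, hα2, hk2, -, rfl⟩ |
      ⟨hα2, hk2, -, rfl⟩ <;>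
    simp_all

end VPTSAux

/-- For a deterministic specification `S` with `n` states there is a
deterministic visibly pushdown fault model `(T, fail)` with `n+1` states that is
ioco-like complete for `S`: every implementation passes `T` iff it ioco-like
conforms to `S`. -/
theorem fault_model_ioco_complete {L : Type} {kind : L → VPKind} (LU : Set L)
    (S : VPTS L kind) (hdet : S.Deterministic) :
    ∃ (T : VPTS L kind) (fail : T.State),
      T.Deterministic ∧
      Fintype.card T.State = Fintype.card S.State + 1 ∧
      ∀ I : VPTS L kind, VPTS.Passes T fail I ↔ VPTS.Ioco LU I S := by
  classical
  refine ⟨VPTSAux.faultT LU S, none, ⟨?_, ?_⟩, ?_, ?_⟩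
  · -- initial states form a subsingleton
    intro x hx y hy
    simp only [VPTSAux.faultT, Set.mem_setOf_eq] at hx hy
    obtain ⟨s, hs, rfl⟩ := hx
    obtain ⟨s', hs', rfl⟩ := hy
    rw [hdet.1 hs hs']
  · -- unique configuration per observable trace
    intro σ t₀ h₀ t₀' h₀' c c' h h'
    simp only [VPTSAux.faultT, Set.mem_setOf_eq] at h₀ h₀'
    obtain ⟨s₀, hs₀, rfl⟩ := h₀
    obtain ⟨s₀', hs₀', rfl⟩ := h₀'
    have hee : s₀ = s₀' := hdet.1 hs₀ hs₀'
    subst hee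
    rcases VPTSAux.t_back LU S h s₀ [] rfl with
        ⟨s1, α1, hS1, rfl⟩ | ⟨σ1, ℓ1, s1, α1, hσ1, hS1, hLU1, hF1⟩ <;>
      rcases VPTSAux.t_back LU S h' s₀ [] rfl with
        ⟨s2, α2, hS2, rfl⟩ | ⟨σ2, ℓ2, s2, α2, hσ2, hS2, hLU2, hF2⟩
    · have he := hdet.2 σ s₀ hs₀ s₀ hs₀ _ _ hS1 hS2
      injection he with e1 e2
      subst e1; subst e2; rfl
    · subst hσ2
      obtain ⟨d, hd1, hd2⟩ := VPTSAux.obs_split hS1 σ2 [ℓ2] rfl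
      obtain ⟨sx, αx⟩ := d
      have he : (sx, αx) = (s2, α2) := hdet.2 σ2 s₀ hs₀ s₀ hs₀ _ _ hd1 hS2
      rw [he] at hd2
      exact absurd (VPTSAux.direct_of_enabled hdet hs₀ hS2 hd2)
        (VPTSAux.not_direct_of_fail hF2)
    · subst hσ1
      obtain ⟨d, hd1, hd2⟩ := VPTSAux.obs_split hS2 σ1 [ℓ1] rfl
      obtain ⟨sx, αx⟩ := d
      have he : (sx, αx) = (s1, α1) := hdet.2 σ1 s₀ hs₀ s₀ hs₀ _ _ hd1 hS1
      rw [he] at hd2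
      exact absurd (VPTSAux.direct_of_enabled hdet hs₀ hS1 hd2)
        (VPTSAux.not_direct_of_fail hF1)
    · obtain ⟨rfl, hl⟩ := List.append_inj' (hσ1.symm.trans hσ2) rfl
      injection hl with hl1 hl2
      subst hl1
      have he := hdet.2 σ1 s₀ hs₀ s₀ hs₀ _ _ hS1 hS2
      injection he with e1 e2
      subst e1; subst e2
      exact VPTSAux.fail_unique hF1 hF2
  · -- cardinality
    exact Fintype.card_option
  · -- completeness
    intro I
    constructor
    · -- passes → ioco
      intro hP σ hσ q₀ hq₀ ℓ hℓ
      simp only [VPTS.otr, Set.mem_setOf_eq] at hσ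
      obtain ⟨s₀, hs₀, c, hSrun⟩ := hσ
      obtain ⟨s, α⟩ := c
      simp only [VPTS.outSet, VPTS.after, Set.mem_setOf_eq] at hℓ
      obtain ⟨hℓLU, cI, hcI, cI', hstep⟩ := hℓ
      refine ⟨s₀, hs₀, ?_⟩
      simp only [VPTS.outSet, VPTS.after, Set.mem_setOf_eq]
      refine ⟨hℓLU, (s, α), hSrun, ?_⟩
      by_contra hno
      have hnd : ¬ VPTSAux.Direct S s α ℓ := fun hD => hno (VPTSAux.enabled_of_direct hD)
      obtain ⟨qI, βI⟩ := cI
      have hT : (VPTSAux.faultT LU S).Obs (some s₀, []) σ (some s, α.map some) :=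
        VPTSAux.lift_obs LU S hSrun
      obtain ⟨hprod, hlen⟩ := VPTSAux.prod_obs σ hT hcI rfl
      obtain ⟨d, d', hcd, hv, -⟩ := VPTSAux.obs_cons hstep ℓ [] rfl
      obtain ⟨qI1, βd⟩ := d
      have hβ : βd = βI := VPTSAux.obs_nil_stack hcd rfl
      subst hβ
      obtain ⟨qI2, β2⟩ := d'
      have hsil := VPTSAux.silent_liftR (M := VPTSAux.faultT LU S) hcd rfl (some s)
        ((α.map some).zip βd)
      rcases hv with ⟨W, hmI, hs2⟩ | ⟨W, β', hmI, hsa, hs2⟩ | ⟨hmI, hsa, hs2⟩ | ⟨hmI, hs2⟩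
      · -- call
        dsimp at hmI
        have hk := I.push_call _ _ _ _ hmI
        have hne : ¬ ∃ Z q, (s, ℓ, Z, q) ∈ S.pushT :=
          fun ⟨Z, q, hm⟩ => hnd (Or.inl ⟨Z, q, hm⟩)
        have hstepP : ((VPTSAux.faultT LU S).prod I).Obs
            ((some s, qI1), (α.map some).zip βd) [ℓ]
            ((none, qI2), (none, W) :: (α.map some).zip βd) :=
          VPTS.Obs.push ⟨Or.inr ⟨s, ℓ, hℓLU, hk, hne, rfl⟩, hmI⟩ (VPTS.Obs.refl _)
        exact hP (σ ++ [ℓ]) (some s₀) ⟨s₀, hs₀, rfl⟩ q₀ hq₀ qI2 _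
          (VPTSAux.obs_trans hprod (VPTSAux.obs_trans hsil hstepP))
      · -- return, nonempty stack
        dsimp at hmI hsa
        subst hsa
        cases α with
        | nil => simp at hlen
        | cons A α' =>
          have hk := I.pop_ret _ _ _ _ hmI
          have hne : ¬ ∃ q, (s, ℓ, some A, q) ∈ S.popT :=
            fun ⟨q, hm⟩ => hnd (Or.inr (Or.inr (Or.inl ⟨A, α', q, rfl, hm⟩)))
          have hstepP : ((VPTSAux.faultT LU S).prod I).Obs
              ((some s, qI1), (some A, W) :: (α'.map some).zip β') [ℓ]
              ((none, qI2), (α'.map some).zip β') :=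
            VPTS.Obs.pop ⟨Or.inr (Or.inr (Or.inl ⟨s, ℓ, A, hℓLU, hk, hne, rfl⟩)), hmI⟩ (VPTS.Obs.refl _)
          exact hP (σ ++ [ℓ]) (some s₀) ⟨s₀, hs₀, rfl⟩ q₀ hq₀ qI2 _
            (VPTSAux.obs_trans hprod (VPTSAux.obs_trans hsil hstepP))
      · -- return, empty stack
        dsimp at hmI hsa
        subst hsa
        cases α with
        | cons A α' => simp at hlen
        | nil =>
          have hk := I.pop_ret _ _ _ _ hmI
          have hne : ¬ ∃ q, (s, ℓ, (none : Option S.Stack), q) ∈ S.popT :=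
            fun ⟨q, hm⟩ => hnd (Or.inr (Or.inr (Or.inr ⟨rfl, q, hm⟩)))
          have hstepP : ((VPTSAux.faultT LU S).prod I).Obs
              ((some s, qI1), []) [ℓ] ((none, qI2), []) :=
            VPTS.Obs.popEmpty ⟨Or.inr (Or.inr (Or.inr ⟨s, ℓ, hℓLU, hk, hne, rfl⟩)), hmI⟩
              (VPTS.Obs.refl _)
          exact hP (σ ++ [ℓ]) (some s₀) ⟨s₀, hs₀, rfl⟩ q₀ hq₀ qI2 _
            (VPTSAux.obs_trans hprod (VPTSAux.obs_trans hsil hstepP))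
      · -- internal
        dsimp at hmI
        have hk := I.int_simple _ _ _ hmI
        have hne : ¬ ∃ q, (s, some ℓ, q) ∈ S.intT :=
          fun ⟨q, hm⟩ => hnd (Or.inr (Or.inl ⟨q, hm⟩))
        have hstepP : ((VPTSAux.faultT LU S).prod I).Obs
            ((some s, qI1), (α.map some).zip βd) [ℓ]
            ((none, qI2), (α.map some).zip βd) :=
          VPTS.Obs.int ⟨Or.inr ⟨s, ℓ, hℓLU, hk, hne, rfl⟩, hmI⟩ (VPTS.Obs.refl _)
        exact hP (σ ++ [ℓ]) (some s₀) ⟨s₀, hs₀, rfl⟩ q₀ hq₀ qI2 _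
          (VPTSAux.obs_trans hprod (VPTSAux.obs_trans hsil hstepP))
    · -- ioco → passes
      intro hIoco σ t₀ ht₀ q₀ hq₀ q α hObs
      simp only [VPTSAux.faultT, Set.mem_setOf_eq] at ht₀
      obtain ⟨s₀, hs₀, rfl⟩ := ht₀
      have hTrun := VPTSAux.prod_projL hObs
      have hIrun := VPTSAux.prod_projR hObs
      rcases VPTSAux.t_back LU S hTrun s₀ [] rfl with
          ⟨s1, α1, -, hc'⟩ | ⟨σ1, ℓ, s1, α1, hσ, hSrun, hLU, hF⟩
      · simp at hc'
      · obtain ⟨d, hd1, hd2⟩ := VPTSAux.obs_split hIrun σ1 [ℓ] hσ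
        have hout := hIoco σ1 ⟨s₀, hs₀, (s1, α1), hSrun⟩ q₀ hq₀ ℓ
          ⟨hLU, d, hd1, (q, α.map Prod.snd), hd2⟩
        obtain ⟨s₀', hs₀2, hℓout⟩ := hout
        have hee : s₀' = s₀ := hdet.1 hs₀2 hs₀
        subst hee
        simp only [VPTS.outSet, VPTS.after, Set.mem_setOf_eq] at hℓout
        obtain ⟨-, cS, hcS, cS', hstepS⟩ := hℓout
        obtain ⟨sx, αx⟩ := cS
        have he : (sx, αx) = (s1, α1) := hdet.2 σ1 s₀' hs₀2 s₀' hs₀2 _ _ hcS hSrun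
        rw [he] at hstepS
        exact absurd (VPTSAux.direct_of_enabled hdet hs₀2 hSrun hstepS)
          (VPTSAux.not_direct_of_fail hF)
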